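/- Let μ̃ be the bilinear skew-symmetric map on ℝ^7 with nonzero basis brackets [e1,e2]=(3√34/68)e3, [e1,e3]=(√119/34)e4, [e1,e4]=(3√187/187)e5-(7√374/748)e6, [e1,e5]=(√374/68)e7, [e2,e3]=(3√1309/374)e5+(√2618/374)e6, [e2,e4]=(3√34/68)e7. Then μ̃ satisfies the Jacobi identity, D = diag(1,2,3,4,5,5,6) is a derivation of (ℝ^7,μ̃), and m(μ̃) = -(29/34)·Id + (13/68)·D; in particular m(μ̃) = diag(-45/68,-8/17,-19/68,-3/34,7/68,7/68,5/17). -/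
import Mathlib


open Finset

noncomputable section

/-- `ℝ⁷` with its standard basis and standard inner product. -/
abbrev V7 : Type := Fin 7 → ℝ

/-- The standard basis vector `e i`. -/
def e (i : Fin 7) : V7 := Pi.single i 1

/-- The standard inner product on `ℝ⁷`. -/
def dot (x y : V7) : ℝ := ∑ i, x i * y i

/-- Structure constants built from a list of entries `(i, j, k, a)`, each meaning that
`μ (e i) (e j)` has component `a` along `e k` (and `μ (e j) (e i)` has component `-a`);
all unlisted basis brackets are `0`. -/
def toC (L : List (Fin 7 × Fin 7 × Fin 7 × ℝ)) (i j k : Fin 7) : ℝ :=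
  (L.map fun t =>
      (if t.1 = i ∧ t.2.1 = j ∧ t.2.2.1 = k then t.2.2.2 else 0)
    - (if t.1 = j ∧ t.2.1 = i ∧ t.2.2.1 = k then t.2.2.2 else 0)).sum

/-- The bilinear skew-symmetric map on `ℝ⁷` with structure constants `c`. -/
def br (c : Fin 7 → Fin 7 → Fin 7 → ℝ) (x y : V7) : V7 :=
  fun k => ∑ i, ∑ j, x i * y j * c i j k

lemma br_add_left (c : Fin 7 → Fin 7 → Fin 7 → ℝ) (x x' y : V7) :
    br c (x + x') y = br c x y + br c x' y := by
  funext k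
  simp only [br, Pi.add_apply, ← Finset.sum_add_distrib]
  exact Finset.sum_congr rfl fun i _ => Finset.sum_congr rfl fun j _ => by ring

lemma br_smul_left (c : Fin 7 → Fin 7 → Fin 7 → ℝ) (r : ℝ) (x y : V7) :
    br c (r • x) y = r • br c x y := by
  funext k
  simp only [br, Pi.smul_apply, smul_eq_mul, Finset.mul_sum]
  exact Finset.sum_congr rfl fun i _ => Finset.sum_congr rfl fun j _ => by ring

lemma br_add_right (c : Fin 7 → Fin 7 → Fin 7 → ℝ) (x y y' : V7) :
    br c x (y + y') = br c x y + br c x y' := by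
  funext k
  simp only [br, Pi.add_apply, ← Finset.sum_add_distrib]
  exact Finset.sum_congr rfl fun i _ => Finset.sum_congr rfl fun j _ => by ring

lemma br_smul_right (c : Fin 7 → Fin 7 → Fin 7 → ℝ) (r : ℝ) (x y : V7) :
    br c x (r • y) = r • br c x y := by
  funext k
  simp only [br, Pi.smul_apply, smul_eq_mul, Finset.mul_sum]
  exact Finset.sum_congr rfl fun i _ => Finset.sum_congr rfl fun j _ => by ring

lemma br_zero_left (c : Fin 7 → Fin 7 → Fin 7 → ℝ) (y : V7) : br c 0 y = 0 := by
  funext k; simp [br]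

lemma br_zero_right (c : Fin 7 → Fin 7 → Fin 7 → ℝ) (x : V7) : br c x 0 = 0 := by
  funext k; simp [br]

/-- The space of derivations of the algebra `(ℝ⁷, br c)`, i.e. the linear maps `D` with
`D (μ x y) = μ (D x) y + μ x (D y)` for all `x, y`, as a submodule of the endomorphisms. -/
def derivations (c : Fin 7 → Fin 7 → Fin 7 → ℝ) : Submodule ℝ (Module.End ℝ V7) where
  carrier := {D | ∀ x y, D (br c x y) = br c (D x) y + br c x (D y)}
  add_mem' := by
    intro D E hD hE x y
    simp only [LinearMap.add_apply, hD x y, hE x y, br_add_left, br_add_right]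
    abel
  zero_mem' := by
    intro x y
    simp [br_zero_left, br_zero_right]
  smul_mem' := by
    intro r D hD x y
    simp only [LinearMap.smul_apply, hD x y, smul_add, br_smul_left, br_smul_right]

/-- The Jacobi identity for the bracket `br c`. -/
def Jacobi (c : Fin 7 → Fin 7 → Fin 7 → ℝ) : Prop :=
  ∀ x y z : V7, br c (br c x y) z + br c (br c y z) x + br c (br c z x) y = 0

/-- Skew-symmetry of the bracket `br c`. -/
def Skew (c : Fin 7 → Fin 7 → Fin 7 → ℝ) : Prop :=
  ∀ x y : V7, br c x y = - br c y x

/-- The diagonal endomorphism `diag (a 1, …, a 7)` of `ℝ⁷`, `e i ↦ a i • e i`. -/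
def diagL (a : Fin 7 → ℝ) : Module.End ℝ V7 :=
  LinearMap.pi fun i => a i • LinearMap.proj i

/-- Structure constants of the bracket `μ̃`. -/
def c12 : Fin 7 → Fin 7 → Fin 7 → ℝ :=
  toC [(0, 1, 2, 3 * Real.sqrt 34 / 68),
   (0, 2, 3, Real.sqrt 119 / 34),
   (0, 3, 4, 3 * Real.sqrt 187 / 187),
   (0, 3, 5, -(7 * Real.sqrt 374 / 748)),
   (0, 4, 6, Real.sqrt 374 / 68),
   (1, 2, 4, 3 * Real.sqrt 1309 / 374),
   (1, 2, 5, Real.sqrt 2618 / 374),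
   (1, 3, 6, 3 * Real.sqrt 34 / 68)]


lemma toC_swap (L : List (Fin 7 × Fin 7 × Fin 7 × ℝ)) (i j k : Fin 7) :
    toC L j i k = - toC L i j k := by
  induction L with
  | nil => simp [toC]
  | cons a L ih =>
    simp only [toC, List.map_cons, List.sum_cons] at *
    rw [ih]; ring

lemma skew_c12 : Skew c12 := by
  intro x y
  funext k
  simp only [br, Pi.neg_apply, ← Finset.sum_neg_distrib]
  rw [Finset.sum_comm]
  refine Finset.sum_congr rfl fun i _ => Finset.sum_congr rfl fun j _ => ?_
  rw [show c12 i j k = - c12 j i k from (toC_swap _ _ _ _).symm ▸ rfl]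
  ring

lemma sum_delta1 (a : ℝ) (p q : Fin 7) (P : Prop) [Decidable P] (x y : V7) :
    (∑ i, ∑ j, x i * y j * (if p = i ∧ q = j ∧ P then a else 0))
      = if P then a * (x p * y q) else 0 := by
  rw [Finset.sum_eq_single p]
  · rw [Finset.sum_eq_single q]
    · by_cases h : P <;> simp [h] <;> ring
    · intro b _ hb; simp [(Ne.symm hb : ¬ q = b)]
    · simp
  · intro b _ hb
    have : ¬ p = b := Ne.symm hb
    simp [this]
  · simp

lemma sum_delta2 (a : ℝ) (p q : Fin 7) (P : Prop) [Decidable P] (x y : V7) :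
    (∑ i, ∑ j, x i * y j * (if p = j ∧ q = i ∧ P then a else 0))
      = if P then a * (x q * y p) else 0 := by
  rw [Finset.sum_comm]
  rw [Finset.sum_eq_single p]
  · rw [Finset.sum_eq_single q]
    · by_cases h : P <;> simp [h] <;> ring
    · intro b _ hb; simp [(Ne.symm hb : ¬ q = b)]
    · simp
  · intro b _ hb
    have : ¬ p = b := Ne.symm hb
    simp [this]
  · simp

lemma toC_cons (t : Fin 7 × Fin 7 × Fin 7 × ℝ) (L : List (Fin 7 × Fin 7 × Fin 7 × ℝ))
    (i j k : Fin 7) :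
    toC (t :: L) i j k =
      ((if t.1 = i ∧ t.2.1 = j ∧ t.2.2.1 = k then t.2.2.2 else 0)
        - (if t.1 = j ∧ t.2.1 = i ∧ t.2.2.1 = k then t.2.2.2 else 0)) + toC L i j k := by
  simp [toC]

lemma br_toC (L : List (Fin 7 × Fin 7 × Fin 7 × ℝ)) (x y : V7) (k : Fin 7) :
    br (toC L) x y k =
      (L.map fun t => if t.2.2.1 = k then
          t.2.2.2 * (x t.1 * y t.2.1) - t.2.2.2 * (x t.2.1 * y t.1) else 0).sum := by
  induction L with
  | nil => simp [br, toC]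
  | cons t L ih =>
    simp only [List.map_cons, List.sum_cons, ← ih, br, toC_cons]
    simp only [mul_add, mul_sub, Finset.sum_add_distrib, Finset.sum_sub_distrib,
      sum_delta1, sum_delta2]
    by_cases h : t.2.2.1 = k <;> simp [h] <;> ring

lemma vec7_five {α : Type*} (a0 a1 a2 a3 a4 a5 a6 : α) : ![a0,a1,a2,a3,a4,a5,a6] 5 = a5 := rfl
lemma vec7_six {α : Type*} (a0 a1 a2 a3 a4 a5 a6 : α) : ![a0,a1,a2,a3,a4,a5,a6] 6 = a6 := rfl

noncomputable def A : ℝ := 3 * Real.sqrt 34 / 68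
noncomputable def B : ℝ := Real.sqrt 119 / 34
noncomputable def C : ℝ := 3 * Real.sqrt 187 / 187
noncomputable def C' : ℝ := -(7 * Real.sqrt 374 / 748)
noncomputable def E : ℝ := Real.sqrt 374 / 68
noncomputable def F : ℝ := 3 * Real.sqrt 1309 / 374
noncomputable def F' : ℝ := Real.sqrt 2618 / 374
noncomputable def G : ℝ := 3 * Real.sqrt 34 / 68

noncomputable def brX (x y : V7) : V7 :=
  ![0, 0, A * (x 0 * y 1 - x 1 * y 0), B * (x 0 * y 2 - x 2 * y 0),
    C * (x 0 * y 3 - x 3 * y 0) + F * (x 1 * y 2 - x 2 * y 1),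
    C' * (x 0 * y 3 - x 3 * y 0) + F' * (x 1 * y 2 - x 2 * y 1),
    E * (x 0 * y 4 - x 4 * y 0) + G * (x 1 * y 3 - x 3 * y 1)]

lemma br_c12 (x y : V7) : br c12 x y = brX x y := by
  funext k
  fin_cases k <;>
    · rw [show c12 = toC _ from rfl, br_toC]
      simp (config := { decide := true }) [brX, A, B, C, C', E, F, F', G, vec7_five, vec7_six]
      try ring

lemma hprod1 : Real.sqrt 1309 * Real.sqrt 374 = 11 * (Real.sqrt 119 * Real.sqrt 34) := by
  rw [← Real.sqrt_mul (by norm_num), ← Real.sqrt_mul (by norm_num)]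
  rw [show (1309 * 374 : ℝ) = 121 * (119 * 34) by norm_num,
    Real.sqrt_mul (by norm_num),
    show Real.sqrt 121 = 11 by
      rw [show (121 : ℝ) = 11 ^ 2 by norm_num]; exact Real.sqrt_sq (by norm_num)]

lemma hprod2 : Real.sqrt 1309 * Real.sqrt 2618 = 7 * (Real.sqrt 187 * Real.sqrt 374) := by
  rw [← Real.sqrt_mul (by norm_num), ← Real.sqrt_mul (by norm_num)]
  rw [show (1309 * 2618 : ℝ) = 49 * (187 * 374) by norm_num,
    Real.sqrt_mul (by norm_num),
    show Real.sqrt 49 = 7 by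
      rw [show (49 : ℝ) = 7 ^ 2 by norm_num]; exact Real.sqrt_sq (by norm_num)]

lemma sq34 : Real.sqrt 34 ^ 2 = 34 := Real.sq_sqrt (by norm_num)
lemma sq119 : Real.sqrt 119 ^ 2 = 119 := Real.sq_sqrt (by norm_num)
lemma sq187 : Real.sqrt 187 ^ 2 = 187 := Real.sq_sqrt (by norm_num)
lemma sq374 : Real.sqrt 374 ^ 2 = 374 := Real.sq_sqrt (by norm_num)
lemma sq1309 : Real.sqrt 1309 ^ 2 = 1309 := Real.sq_sqrt (by norm_num)
lemma sq2618 : Real.sqrt 2618 ^ 2 = 2618 := Real.sq_sqrt (by norm_num)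

lemma hA2 : A ^ 2 = 153 / 2312 := by
  rw [A, div_pow, mul_pow, sq34]; norm_num
lemma hB2 : B ^ 2 = 119 / 1156 := by
  rw [B, div_pow, sq119]; norm_num
lemma hC2 : C ^ 2 = 9 / 187 := by
  rw [C, div_pow, mul_pow, sq187]; norm_num
lemma hC'2 : C' ^ 2 = 49 / 1496 := by
  rw [C', neg_pow, div_pow, mul_pow, sq374]; norm_num
lemma hE2 : E ^ 2 = 11 / 136 := by
  rw [E, div_pow, sq374]; norm_num
lemma hF2 : F ^ 2 = 63 / 748 := by
  rw [F, div_pow, mul_pow, sq1309]; norm_num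
lemma hF'2 : F' ^ 2 = 7 / 374 := by
  rw [F', div_pow, sq2618]; norm_num
lemma hG2 : G ^ 2 = 153 / 2312 := by
  rw [G, div_pow, mul_pow, sq34]; norm_num

lemma hsum : C * C' + F * F' = 0 := by
  simp only [C, C', F, F']
  linear_combination (3 / 139876) * hprod2

lemma jac : Jacobi c12 := by
  intro x y z
  funext k
  simp only [br_c12, Pi.add_apply, Pi.zero_apply]
  fin_cases k <;>
    simp [brX, vec7_five, vec7_six, A, B, C, C', E, F, F', G] <;>
    try ring
  linear_combination (-3 / 25432 * (x 0 * y 1 * z 2 - x 0 * y 2 * z 1 - x 2 * y 1 * z 0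
    - x 1 * y 0 * z 2 + x 1 * y 2 * z 0 + x 2 * y 0 * z 1)) * hprod1

lemma diagL_apply (a : Fin 7 → ℝ) (v : V7) (i : Fin 7) : diagL a v i = a i * v i := rfl

lemma deriv12 : diagL ![1, 2, 3, 4, 5, 5, 6] ∈ derivations c12 := by
  intro x y
  funext k
  simp only [Pi.add_apply, diagL_apply, br_c12]
  fin_cases k <;>
    · simp [brX, vec7_five, vec7_six, diagL_apply]
      try ring

lemma dot_e (v : V7) (j : Fin 7) : dot v (e j) = v j := by
  simp [dot, e, Pi.single_apply, mul_ite]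

set_option maxHeartbeats 4000000 in
/-- The bracket satisfies the Jacobi identity (and is skew-symmetric),
`D` is a derivation of it, and the unnormalized moment map `m(μ̃)` — i.e. the endomorphism
`m` of `ℝ⁷` determined by
`⟨m x, y⟩ = -2 ∑ᵢⱼ ⟨μ̃(x,eᵢ),eⱼ⟩⟨μ̃(y,eᵢ),eⱼ⟩ + ∑ᵢⱼ ⟨μ̃(eᵢ,eⱼ),x⟩⟨μ̃(eᵢ,eⱼ),y⟩` —
equals `-(29/34) • Id + 13/68 • D`, which is the indicated diagonal map. -/
theorem stmt :
    Skew c12 ∧ Jacobi c12 ∧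
    diagL ![1, 2, 3, 4, 5, 5, 6] ∈ derivations c12 ∧
    ∀ m : Module.End ℝ V7,
      (∀ x y : V7, dot (m x) y =
          -2 * ∑ i, ∑ j, dot (br c12 x (e i)) (e j) * dot (br c12 y (e i)) (e j)
          + ∑ i, ∑ j, dot (br c12 (e i) (e j)) x * dot (br c12 (e i) (e j)) y) →
      m = (-(29/34) : ℝ) • (1 : Module.End ℝ V7) + (13/68 : ℝ) • diagL ![1, 2, 3, 4, 5, 5, 6]
      ∧ m = diagL ![-45/68, -8/17, -19/68, -3/34, 7/68, 7/68, 5/17] := by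
  refine ⟨skew_c12, jac, deriv12, ?_⟩
  intro m hm
  have key : ∀ x : V7, ∀ j : Fin 7,
      m x j = ![(-45:ℝ)/68, -8/17, -19/68, -3/34, 7/68, 7/68, 5/17] j * x j := by
    intro x j
    have h := hm x (e j)
    rw [dot_e] at h
    fin_cases j <;>
      · rw [h]
        simp only [Fin.sum_univ_seven, br_c12, dot_e, dot]
        simp (config := { decide := true }) [brX, vec7_five, vec7_six, e, Pi.single_apply,
          Fin.sum_univ_seven]
        try ring_nf
        try simp only [hA2, hB2, hC2, hC'2, hE2, hF2, hF'2, hG2]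
        try ring
        try linear_combination (2 * x 5) * hsum
        try linear_combination (2 * x 4) * hsum
  have hdiag : m = diagL ![-45/68, -8/17, -19/68, -3/34, 7/68, 7/68, 5/17] :=
    LinearMap.ext fun x => funext fun j => (key x j).trans (diagL_apply _ _ _).symm
  refine ⟨?_, hdiag⟩
  rw [hdiag]
  refine LinearMap.ext fun x => funext fun j => ?_
  simp only [LinearMap.add_apply, LinearMap.smul_apply, Module.End.one_apply,
    Pi.add_apply, Pi.smul_apply, smul_eq_mul, diagL_apply]
  fin_cases j <;>
    · simp [vec7_five, vec7_six]
      try ring
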